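/- Let α ∈ (0, 1/2], β ∈ [0, α/2), and let S be an (α,β)-admissible N×N real matrix (N ≥ 2). Then for every x in the convex hull of V̄, the vector (S⊗I₂)ᵀ x lies in (1 − α + 2β) · (convex hull of V̄); in particular, (S⊗I₂)ᵀ maps the convex hull of V̄ into a proper subset of itself. -/
import Mathlib


open Finset Pointwise

/-- The vertex set `V̄` of vectors `v_{p,q,j}` with `p ≠ q`, `j ∈ {1,2}`. -/
def vertexSetVbar (N : ℕ) : Set (Fin N × Fin 2 → ℝ) :=
  {v | ∃ p q : Fin N, ∃ j : Fin 2, p ≠ q ∧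
    v = fun il => if il = (p, j) then (1 / 2 : ℝ) else if il = (q, j) then -(1 / 2 : ℝ) else 0}

/-- The action of `(S ⊗ I₂)ᵀ` on `ℝ^{2N}`: `((S⊗I₂)ᵀ x)(i,j) = ∑ k, S k i * x (k,j)`. -/
def kronTr {N : ℕ} (S : Matrix (Fin N) (Fin N) ℝ) (x : Fin N × Fin 2 → ℝ) :
    Fin N × Fin 2 → ℝ :=
  fun il => ∑ k, S k il.1 * x (k, il.2)

/-- An `N × N` real matrix `S` is `(α,β)`-admissible if every row sums to `1`,
the negative part of every row sums to at least `-β`, and every pair of distinct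
rows shares a column where both entries are at least `α` (neighbor-shared). -/
def Admissible {N : ℕ} (α β : ℝ) (S : Matrix (Fin N) (Fin N) ℝ) : Prop :=
  (∀ i, ∑ j, S i j = 1) ∧ (∀ i, -β ≤ ∑ j, min (S i j) 0) ∧
    (∀ p q : Fin N, p ≠ q → ∃ i, α ≤ S p i ∧ α ≤ S q i)

private noncomputable def emb {N : ℕ} (j : Fin 2) (y : Fin N → ℝ) : Fin N × Fin 2 → ℝ :=
  fun il => if il.2 = j then y il.1 else 0

private lemma emb_add {N : ℕ} (j : Fin 2) (y z : Fin N → ℝ) :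
    emb j (y + z) = emb j y + emb j z := by
  funext il; simp only [emb, Pi.add_apply]; split <;> simp

private lemma emb_smul {N : ℕ} (j : Fin 2) (c : ℝ) (y : Fin N → ℝ) :
    emb j (c • y) = c • emb j y := by
  funext il; simp only [emb, Pi.smul_apply, smul_eq_mul]; split <;> simp

private noncomputable def vfun {N : ℕ} (p q : Fin N) (j : Fin 2) : Fin N × Fin 2 → ℝ :=
  fun il => if il = (p, j) then (1/2 : ℝ) else if il = (q, j) then -(1/2 : ℝ) else 0

private lemma vfun_mem {N : ℕ} (p q : Fin N) (j : Fin 2) (h : p ≠ q) :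
    vfun p q j ∈ vertexSetVbar N := ⟨p, q, j, h, rfl⟩

private lemma vfun_eq_emb {N : ℕ} (p q : Fin N) (j : Fin 2) :
    vfun p q j = emb j (fun i => if i = p then (1/2:ℝ) else if i = q then -(1/2:ℝ) else 0) := by
  funext il
  obtain ⟨i, l⟩ := il
  by_cases hl : l = j <;> simp [vfun, emb, Prod.ext_iff, hl]

private lemma vfun_abs_sum {N : ℕ} {p q : Fin N} (h : p ≠ q) (j : Fin 2) :
    ∑ il : Fin N × Fin 2, |vfun p q j il| = 1 := by
  have hpq : ((p, j) : Fin N × Fin 2) ≠ (q, j) := by simp [Prod.ext_iff, h]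
  have key : ∀ il : Fin N × Fin 2, |vfun p q j il| =
      (if il = (p,j) then (1/2:ℝ) else 0) + (if il = (q,j) then (1/2:ℝ) else 0) := by
    intro il
    rcases eq_or_ne il (p, j) with rfl | h1
    · norm_num [vfun, hpq]
    · rcases eq_or_ne il (q, j) with rfl | h2
      · norm_num [vfun, h1]
      · simp [vfun, h1, h2]
  rw [Finset.sum_congr rfl fun il _ => key il, Finset.sum_add_distrib]
  simp [Finset.sum_ite_eq']
  norm_num

private lemma vfun_add_swap {N : ℕ} {p q : Fin N} (h : p ≠ q) (j : Fin 2) :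
    vfun p q j + vfun q p j = 0 := by
  funext il
  have hpq : ((p, j) : Fin N × Fin 2) ≠ (q, j) := by simp [Prod.ext_iff, h]
  rcases eq_or_ne il (p, j) with rfl | h1
  · simp [vfun, hpq, Pi.add_apply]
  · rcases eq_or_ne il (q, j) with rfl | h2
    · simp [vfun, hpq.symm, Pi.add_apply]
    · simp [vfun, h1, h2, Pi.add_apply]

private lemma zero_mem_hull {N : ℕ} (hN : 2 ≤ N) :
    (0 : Fin N × Fin 2 → ℝ) ∈ convexHull ℝ (vertexSetVbar N) := by
  have h01 : (⟨0, by omega⟩ : Fin N) ≠ ⟨1, by omega⟩ := by simp [Fin.ext_iff]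
  have hv := subset_convexHull ℝ (vertexSetVbar N) (vfun_mem _ _ 0 h01)
  have hw := subset_convexHull ℝ (vertexSetVbar N) (vfun_mem _ _ 0 h01.symm)
  have hc := (convex_convexHull ℝ (vertexSetVbar N)) hv hw
    (by norm_num : (0:ℝ) ≤ 1/2) (by norm_num : (0:ℝ) ≤ 1/2) (by norm_num)
  have h0 : (1/2 : ℝ) • vfun (⟨0, by omega⟩ : Fin N) ⟨1, by omega⟩ 0
      + (1/2 : ℝ) • vfun (⟨1, by omega⟩ : Fin N) ⟨0, by omega⟩ 0 = 0 := by
    rw [← smul_add, vfun_add_swap h01, smul_zero]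
  rw [← h0]; exact hc

private lemma emb_mem_hull {N : ℕ} (hN : 2 ≤ N) (j : Fin 2) :
    ∀ n : ℕ, ∀ y : Fin N → ℝ, (Finset.univ.filter fun i => y i ≠ 0).card ≤ n →
      (∑ i, y i) = 0 → (∑ i, |y i|) ≤ 1 →
      emb j y ∈ convexHull ℝ (vertexSetVbar N) := by
  intro n
  induction n with
  | zero =>
    intro y hcard hsum habs
    have hy : y = 0 := by
      funext i
      simp only [Pi.zero_apply]
      by_contra hi
      have hmem : i ∈ Finset.univ.filter fun i => y i ≠ 0 := by simp [hi]
      have := Finset.card_pos.2 ⟨i, hmem⟩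
      omega
    subst hy
    have h0 : emb j (0 : Fin N → ℝ) = 0 := by funext il; simp [emb]
    rw [h0]; exact zero_mem_hull hN
  | succ n IH =>
    intro y hcard hsum habs
    by_cases h00 : ∀ i, y i = 0
    · have hy : y = 0 := funext h00
      subst hy
      have h0 : emb j (0 : Fin N → ℝ) = 0 := by funext il; simp [emb]
      rw [h0]; exact zero_mem_hull hN
    push_neg at h00
    obtain ⟨i0, hi0⟩ := h00
    have hea : ∃ a, 0 < y a := by
      by_contra h; push_neg at h
      exact hi0 ((Finset.sum_eq_zero_iff_of_nonpos fun i _ => h i).1 hsum i0 (Finset.mem_univ _))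
    have heb : ∃ b, y b < 0 := by
      by_contra h; push_neg at h
      exact hi0 ((Finset.sum_eq_zero_iff_of_nonneg fun i _ => h i).1 hsum i0 (Finset.mem_univ _))
    obtain ⟨a, ha⟩ := hea
    obtain ⟨b, hb⟩ := heb
    have hab : a ≠ b := by rintro rfl; linarith
    set t : ℝ := min (y a) (-(y b)) with ht_def
    have hta : t ≤ y a := min_le_left _ _
    have htb : t ≤ -(y b) := min_le_right _ _
    have ht : 0 < t := lt_min ha (by linarith)
    set y' : Fin N → ℝ :=
      fun i => y i - (if i = a then t else 0) + (if i = b then t else 0) with hy'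
    have hsum' : ∑ i, y' i = 0 := by
      simp [hy', Finset.sum_add_distrib, Finset.sum_sub_distrib, Finset.sum_ite_eq', hsum]
    have key : ∀ i, |y' i| = |y i| - (if i = a then t else 0) - (if i = b then t else 0) := by
      intro i
      by_cases hia : i = a
      · have hib : i ≠ b := by rw [hia]; exact hab
        have hyi : y' i = y i - t := by simp [hy', hia, hib, hab]
        rw [if_pos hia, if_neg hib, hyi, hia]
        rw [abs_of_nonneg (by linarith : (0:ℝ) ≤ y a - t), abs_of_pos ha, sub_zero]
      · by_cases hib : i = b
        · have hyi : y' i = y b + t := by simp [hy', hia, hib, hab.symm]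
          rw [if_neg hia, if_pos hib, hyi, hib]
          rw [abs_of_nonpos (by linarith : y b + t ≤ 0), abs_of_neg hb]
          ring
        · simp [hy', hia, hib]
    have habs' : ∑ i, |y' i| = (∑ i, |y i|) - 2 * t := by
      rw [Finset.sum_congr rfl fun i _ => key i]
      simp [Finset.sum_sub_distrib, Finset.sum_ite_eq']
      ring
    have habs'nn : (0:ℝ) ≤ ∑ i, |y' i| := Finset.sum_nonneg fun i _ => abs_nonneg _
    have h2t : 2 * t ≤ 1 := by linarith
    have hsub : (Finset.univ.filter fun i => y' i ≠ 0) ⊆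
        (Finset.univ.filter fun i => y i ≠ 0) := by
      intro i hi
      simp only [Finset.mem_filter, Finset.mem_univ, true_and] at hi ⊢
      by_cases hia : i = a
      · rw [hia]; exact ha.ne'
      · by_cases hib : i = b
        · rw [hib]; exact hb.ne
        · intro h; exact hi (by simp [hy', hia, hib, h])
    have hdrop : ∃ i, i ∈ (Finset.univ.filter fun i => y i ≠ 0) ∧
        i ∉ (Finset.univ.filter fun i => y' i ≠ 0) := by
      rcases min_cases (y a) (-(y b)) with ⟨heq, _⟩ | ⟨heq, _⟩
      · refine ⟨a, by simp [ha.ne'], ?_⟩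
        simp only [Finset.mem_filter, Finset.mem_univ, true_and, not_not]
        simp [hy', hab, ht_def, heq]
      · refine ⟨b, by simp [hb.ne], ?_⟩
        simp only [Finset.mem_filter, Finset.mem_univ, true_and, not_not]
        simp [hy', hab.symm, ht_def, heq]
    have hcard' : (Finset.univ.filter fun i => y' i ≠ 0).card ≤ n := by
      obtain ⟨i, hmem, hnot⟩ := hdrop
      have := Finset.card_lt_card ((Finset.ssubset_iff_of_subset hsub).2 ⟨i, hmem, hnot⟩)
      omega
    set w : Fin N → ℝ := fun i => if i = a then (1/2:ℝ) else if i = b then -(1/2:ℝ) else 0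
      with hw
    have hyw : y = (2*t) • w + y' := by
      funext i
      simp only [hw, hy', Pi.add_apply, Pi.smul_apply, smul_eq_mul]
      by_cases hia : i = a
      · have hib : i ≠ b := by rw [hia]; exact hab
        simp only [if_pos hia, if_neg hib]
        ring
      · by_cases hib : i = b
        · simp only [if_pos hib, if_neg hia]
          ring
        · simp [hia, hib]
    have hvw : emb j w ∈ convexHull ℝ (vertexSetVbar N) := by
      refine subset_convexHull ℝ _ ?_
      rw [hw, ← vfun_eq_emb]
      exact vfun_mem a b j hab
    by_cases hs : 1 - 2*t = 0
    · have hy'0 : y' = 0 := by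
        have h1 : ∑ i, |y' i| ≤ 0 := by rw [habs']; linarith
        have h2 : ∀ i ∈ Finset.univ, (0:ℝ) ≤ |y' i| := fun i _ => abs_nonneg _
        funext i
        have := (Finset.sum_eq_zero_iff_of_nonneg h2).1 (le_antisymm h1 habs'nn) i
          (Finset.mem_univ i)
        simpa using abs_eq_zero.1 this
      have h2t1 : (2*t : ℝ) = 1 := by linarith
      rw [hyw, hy'0, add_zero, h2t1, one_smul]
      exact hvw
    · have hs' : 0 < 1 - 2*t := lt_of_le_of_ne (by linarith) (Ne.symm hs)
      set z : Fin N → ℝ := (1 - 2*t)⁻¹ • y' with hz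
      have hz1 : (Finset.univ.filter fun i => z i ≠ 0).card ≤ n := by
        refine le_trans (Finset.card_le_card ?_) hcard'
        intro i hi
        simp only [Finset.mem_filter, Finset.mem_univ, true_and, hz, Pi.smul_apply,
          smul_eq_mul] at hi ⊢
        intro h; exact hi (by rw [h, mul_zero])
      have hz2 : ∑ i, z i = 0 := by
        simp [hz, ← Finset.mul_sum, hsum']
      have hz3 : ∑ i, |z i| ≤ 1 := by
        have heq : ∑ i, |z i| = (1-2*t)⁻¹ * ∑ i, |y' i| := by
          rw [Finset.mul_sum]
          refine Finset.sum_congr rfl fun i _ => ?_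
          simp [hz, abs_mul, abs_of_pos (inv_pos.2 hs')]
        rw [heq, habs']
        calc (1-2*t)⁻¹ * ((∑ i, |y i|) - 2*t) ≤ (1-2*t)⁻¹ * (1-2*t) :=
              mul_le_mul_of_nonneg_left (by linarith) (le_of_lt (inv_pos.2 hs'))
          _ = 1 := inv_mul_cancel₀ (ne_of_gt hs')
      have hzmem := IH z hz1 hz2 hz3
      have hcomb := (convex_convexHull ℝ (vertexSetVbar N)) hvw hzmem
        (by linarith : (0:ℝ) ≤ 2*t) (by linarith : (0:ℝ) ≤ 1-2*t) (by ring)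
      have hz' : (1-2*t) • z = y' := by rw [hz]; exact smul_inv_smul₀ (ne_of_gt hs') y'
      have heq : emb j y = (2*t) • emb j w + (1-2*t) • emb j z := by
        rw [hyw, emb_add, emb_smul, ← emb_smul j (1-2*t) z, hz']
      rw [heq]; exact hcomb

private lemma dobrushin {N : ℕ} {α β : ℝ} (S : Matrix (Fin N) (Fin N) ℝ)
    (hrow : ∀ i, ∑ j, S i j = 1) (hneg : ∀ i, -β ≤ ∑ j, min (S i j) 0)
    {p q i0 : Fin N} (hp : α ≤ S p i0) (hq : α ≤ S q i0) :
    ∑ i, |S p i - S q i| ≤ 2 * (1 - α + 2 * β) := by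
  have habs : ∀ i, |S p i - S q i| = S p i + S q i - 2 * min (S p i) (S q i) := by
    intro i
    rcases le_total (S p i) (S q i) with h | h
    · rw [abs_of_nonpos (by linarith), min_eq_left h]; ring
    · rw [abs_of_nonneg (by linarith), min_eq_right h]; ring
  have hmin : α - 2*β ≤ ∑ i, min (S p i) (S q i) := by
    have h1 : ∀ i, min (S p i) 0 + min (S q i) 0 ≤ min (S p i) (S q i) := by
      intro i
      refine le_min ?_ ?_
      · linarith [min_le_left (S p i) (0:ℝ), min_le_right (S q i) (0:ℝ)]
      · linarith [min_le_right (S p i) (0:ℝ), min_le_left (S q i) (0:ℝ)]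
    have h2 : ∑ i ∈ Finset.univ.erase i0, (min (S p i) 0 + min (S q i) 0)
        ≤ ∑ i ∈ Finset.univ.erase i0, min (S p i) (S q i) :=
      Finset.sum_le_sum fun i _ => h1 i
    have h3 : ∑ i, (min (S p i) 0 + min (S q i) 0)
        ≤ ∑ i ∈ Finset.univ.erase i0, (min (S p i) 0 + min (S q i) 0) := by
      rw [← Finset.add_sum_erase _ _ (Finset.mem_univ i0)]
      have : min (S p i0) 0 + min (S q i0) 0 ≤ 0 := by
        linarith [min_le_right (S p i0) (0:ℝ), min_le_right (S q i0) (0:ℝ)]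
      linarith
    have h4 : -β - β ≤ ∑ i, (min (S p i) 0 + min (S q i) 0) := by
      rw [Finset.sum_add_distrib]; linarith [hneg p, hneg q]
    have h5 : α ≤ min (S p i0) (S q i0) := le_min hp hq
    rw [← Finset.add_sum_erase _ _ (Finset.mem_univ i0)]
    linarith
  calc ∑ i, |S p i - S q i| = ∑ i, (S p i + S q i - 2 * min (S p i) (S q i)) :=
        Finset.sum_congr rfl fun i _ => habs i
    _ = (∑ i, S p i) + (∑ i, S q i) - 2 * ∑ i, min (S p i) (S q i) := by
        rw [Finset.sum_sub_distrib, Finset.sum_add_distrib, Finset.mul_sum]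
    _ ≤ 1 + 1 - 2*(α - 2*β) := by rw [hrow p, hrow q]; linarith
    _ = 2 * (1 - α + 2*β) := by ring

private lemma kronTr_vfun {N : ℕ} (S : Matrix (Fin N) (Fin N) ℝ) {p q : Fin N}
    (h : p ≠ q) (j : Fin 2) :
    kronTr S (vfun p q j) = emb j (fun i => (S p i - S q i) / 2) := by
  funext il
  obtain ⟨i, l⟩ := il
  simp only [kronTr, emb]
  by_cases hl : l = j
  · subst hl
    have key : ∀ k : Fin N, S k i * vfun p q l (k, l)
        = (if k = p then S k i * (1/2) else 0) + (if k = q then S k i * (-(1/2)) else 0) := by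
      intro k
      by_cases hkp : k = p
      · have hkq : k ≠ q := by rw [hkp]; exact h
        simp [vfun, hkp, hkq, Prod.ext_iff, h, Ne.symm h]
      · by_cases hkq : k = q
        · simp [vfun, hkp, hkq, Prod.ext_iff, h, Ne.symm h]
        · simp [vfun, hkp, hkq, Prod.ext_iff, h, Ne.symm h]
    rw [Finset.sum_congr rfl fun k _ => key k, Finset.sum_add_distrib]
    simp only [Finset.sum_ite_eq', Finset.mem_univ, if_true, if_pos rfl]
    ring
  · have : ∀ k : Fin N, S k i * vfun p q j (k, l) = 0 := by
      intro k
      have h1 : ((k, l) : Fin N × Fin 2) ≠ (p, j) := by simp [Prod.ext_iff, hl]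
      have h2 : ((k, l) : Fin N × Fin 2) ≠ (q, j) := by simp [Prod.ext_iff, hl]
      simp [vfun, h1, h2]
    rw [Finset.sum_congr rfl fun k _ => this k]
    simp [hl]

private lemma hull_abs_le {N : ℕ} {x : Fin N × Fin 2 → ℝ}
    (hx : x ∈ convexHull ℝ (vertexSetVbar N)) : ∑ il, |x il| ≤ 1 := by
  have hsub : convexHull ℝ (vertexSetVbar N) ⊆
      {x : Fin N × Fin 2 → ℝ | ∑ il, |x il| ≤ 1} := by
    apply convexHull_min
    · rintro v ⟨p, q, j, hpq, rfl⟩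
      exact le_of_eq (vfun_abs_sum hpq j)
    · intro u hu v hv a b ha hb hab
      simp only [Set.mem_setOf_eq] at hu hv ⊢
      calc ∑ il, |(a • u + b • v) il| ≤ ∑ il, (a * |u il| + b * |v il|) := by
            refine Finset.sum_le_sum fun il _ => ?_
            simp only [Pi.add_apply, Pi.smul_apply, smul_eq_mul]
            calc |a * u il + b * v il| ≤ |a * u il| + |b * v il| := abs_add_le _ _
              _ = a * |u il| + b * |v il| := by
                  rw [abs_mul, abs_mul, abs_of_nonneg ha, abs_of_nonneg hb]
        _ = a * (∑ il, |u il|) + b * (∑ il, |v il|) := by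
            rw [Finset.sum_add_distrib, Finset.mul_sum, Finset.mul_sum]
        _ ≤ a * 1 + b * 1 :=
            add_le_add (mul_le_mul_of_nonneg_left hu ha) (mul_le_mul_of_nonneg_left hv hb)
        _ = 1 := by rw [mul_one, mul_one, hab]
  exact hsub hx

private noncomputable def kronL {N : ℕ} (S : Matrix (Fin N) (Fin N) ℝ) :
    (Fin N × Fin 2 → ℝ) →ₗ[ℝ] (Fin N × Fin 2 → ℝ) where
  toFun := kronTr S
  map_add' x y := by
    funext il
    simp [kronTr, mul_add, Finset.sum_add_distrib]
  map_smul' c x := by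
    funext il
    simp [kronTr, Finset.mul_sum, mul_left_comm]

theorem kronTr_maps_convexHull_Vbar_contractively {N : ℕ} (hN : 2 ≤ N)
    (α β : ℝ) (hα : 0 < α ∧ α ≤ 1 / 2) (hβ : 0 ≤ β ∧ β < α / 2)
    (S : Matrix (Fin N) (Fin N) ℝ) (hS : Admissible α β S) :
    (∀ x ∈ convexHull ℝ (vertexSetVbar N),
      kronTr S x ∈ (1 - α + 2 * β) • convexHull ℝ (vertexSetVbar N)) ∧
    kronTr S '' convexHull ℝ (vertexSetVbar N) ⊂ convexHull ℝ (vertexSetVbar N) := by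
  obtain ⟨hα0, hα2⟩ := hα
  obtain ⟨hβ0, hβ2⟩ := hβ
  obtain ⟨hrow, hneg, hshare⟩ := hS
  set c : ℝ := 1 - α + 2 * β with hc
  have hc0 : 0 < c := by rw [hc]; linarith
  have hc1 : c < 1 := by rw [hc]; linarith
  -- vertices map into c • hull
  have hver : ∀ v ∈ vertexSetVbar N, kronTr S v ∈ c • convexHull ℝ (vertexSetVbar N) := by
    rintro v ⟨p, q, j, hpq, rfl⟩
    obtain ⟨i0, hp, hq⟩ := hshare p q hpq
    have hd : ∑ i, |S p i - S q i| ≤ 2 * c := by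
      rw [hc]; exact dobrushin S hrow hneg hp hq
    set w : Fin N → ℝ := fun i => (S p i - S q i) / 2 with hw
    have hkr : kronTr S
        (fun il => if il = (p, j) then (1/2 : ℝ) else if il = (q, j) then -(1/2 : ℝ) else 0)
        = emb j w := kronTr_vfun S hpq j
    have hwsum : ∑ i, w i = 0 := by
      rw [hw, ← Finset.sum_div, Finset.sum_sub_distrib, hrow p, hrow q]
      norm_num
    have hwabs : ∑ i, |w i| ≤ c := by
      have h1 : ∀ i, |w i| = |S p i - S q i| / 2 := by
        intro i; rw [hw]; rw [abs_div]; norm_num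
      rw [Finset.sum_congr rfl fun i _ => h1 i, ← Finset.sum_div]
      linarith
    have hz4 : emb j (c⁻¹ • w) ∈ convexHull ℝ (vertexSetVbar N) := by
      refine emb_mem_hull hN j
        ((Finset.univ.filter fun i => (c⁻¹ • w) i ≠ 0).card) _ le_rfl ?_ ?_
      · simp only [Pi.smul_apply, smul_eq_mul]
        rw [← Finset.mul_sum, hwsum, mul_zero]
      · have h2 : ∑ i, |(c⁻¹ • w) i| = c⁻¹ * ∑ i, |w i| := by
          rw [Finset.mul_sum]
          refine Finset.sum_congr rfl fun i _ => ?_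
          simp [abs_mul, abs_of_pos (inv_pos.2 hc0)]
        rw [h2]
        calc c⁻¹ * ∑ i, |w i| ≤ c⁻¹ * c :=
              mul_le_mul_of_nonneg_left hwabs (le_of_lt (inv_pos.2 hc0))
          _ = 1 := inv_mul_cancel₀ (ne_of_gt hc0)
    have hfin := Set.smul_mem_smul_set (a := c) hz4
    rw [← emb_smul, smul_inv_smul₀ (ne_of_gt hc0)] at hfin
    rw [hkr]
    exact hfin
  -- part 1
  have hmap : ∀ x ∈ convexHull ℝ (vertexSetVbar N),
      kronTr S x ∈ c • convexHull ℝ (vertexSetVbar N) := by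
    intro x hx
    have himg : (kronL S) '' convexHull ℝ (vertexSetVbar N)
        = convexHull ℝ ((kronL S) '' vertexSetVbar N) :=
      LinearMap.image_convexHull _ _
    have hsubset : convexHull ℝ ((kronL S) '' vertexSetVbar N)
        ⊆ c • convexHull ℝ (vertexSetVbar N) := by
      apply convexHull_min
      · rintro _ ⟨v, hv, rfl⟩
        exact hver v hv
      · exact (convex_convexHull ℝ _).smul c
    have hmem : kronTr S x ∈ (kronL S) '' convexHull ℝ (vertexSetVbar N) :=
      ⟨x, hx, rfl⟩
    exact hsubset (himg ▸ hmem)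
  refine ⟨hmap, ?_⟩
  -- c • hull ⊆ hull
  have hsmul_sub : c • convexHull ℝ (vertexSetVbar N) ⊆ convexHull ℝ (vertexSetVbar N) := by
    rintro _ ⟨y, hy, rfl⟩
    have h0 := zero_mem_hull hN
    have hcomb := (convex_convexHull ℝ (vertexSetVbar N)) hy h0
      (le_of_lt hc0) (by linarith : (0:ℝ) ≤ 1 - c) (by ring)
    simpa using hcomb
  have hsub12 : kronTr S '' convexHull ℝ (vertexSetVbar N) ⊆ convexHull ℝ (vertexSetVbar N) := by
    rintro _ ⟨x, hx, rfl⟩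
    exact hsmul_sub (hmap x hx)
  rw [Set.ssubset_iff_of_subset hsub12]
  have h01 : (⟨0, by omega⟩ : Fin N) ≠ ⟨1, by omega⟩ := by simp [Fin.ext_iff]
  refine ⟨vfun ⟨0, by omega⟩ ⟨1, by omega⟩ 0,
    subset_convexHull ℝ _ (vfun_mem _ _ 0 h01), ?_⟩
  intro hmem
  obtain ⟨x, hx, hxe⟩ := hmem
  have h1 := hmap x hx
  rw [hxe] at h1
  obtain ⟨y, hy, hye⟩ := h1
  have h2 : ∑ il, |vfun (⟨0, by omega⟩ : Fin N) ⟨1, by omega⟩ 0 il| ≤ c := by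
    rw [← hye]
    calc ∑ il, |(c • y) il| = c * ∑ il, |y il| := by
          rw [Finset.mul_sum]
          refine Finset.sum_congr rfl fun il _ => ?_
          simp [abs_mul, abs_of_pos hc0]
      _ ≤ c * 1 := mul_le_mul_of_nonneg_left (hull_abs_le hy) hc0.le
      _ = c := mul_one c
  rw [vfun_abs_sum h01 0] at h2
  linarith
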